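/- Fix integer r ≥ 2 and p_n ∈ (0,1) with p_n → 0 and n p_n → ∞. Let π_n(t) := P(Bin(⌊t⌋, p_n) ≥ r), and let f : ℕ → ℝ₊ satisfy f(n) = o(1/p_n). Then n(1 - π_n(n - f(n))) ∼ n (n p_n)^{r-1} (1-p_n)^n / (r-1)! as n → ∞ (ratio converging to 1). -/

import Mathlib

open Filter Finset


/-- The probability that a `Bin(m,p)` random variable equals `i`. -/
noncomputable def binomialP (m : ℕ) (p : ℝ) (i : ℕ) : ℝ :=
  (m.choose i : ℝ) * p ^ i * (1 - p) ^ (m - i)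

/-- `P(Bin(m,p) ≥ k)`. -/
noncomputable def binomTail (m : ℕ) (p : ℝ) (k : ℕ) : ℝ :=
  ∑ i ∈ Finset.Icc k m, binomialP m p i

lemma binom_sum_one (m : ℕ) (p : ℝ) :
    ∑ i ∈ Finset.range (m + 1), binomialP m p i = 1 := by
  have h := add_pow p (1 - p) m
  have h2 : ∑ i ∈ Finset.range (m + 1), binomialP m p i
      = ∑ i ∈ Finset.range (m + 1), p ^ i * (1 - p) ^ (m - i) * (m.choose i : ℝ) :=
    Finset.sum_congr rfl fun i _ => by simp only [binomialP]; ring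
  rw [h2, ← h]
  norm_num

lemma one_sub_binomTail (m r : ℕ) (p : ℝ) (h : r ≤ m + 1) :
    1 - binomTail m p r = ∑ i ∈ Finset.range r, binomialP m p i := by
  have key : ∑ i ∈ Finset.range r, binomialP m p i + binomTail m p r = 1 := by
    rw [← binom_sum_one m p, binomTail]
    rw [Finset.range_eq_Ico, Finset.range_eq_Ico, ← Finset.Ico_add_one_right_eq_Icc, Finset.sum_Ico_consecutive]
    · exact Nat.zero_le _
    · exact h
  linarith

/-- with `π_n(t) = P(Bin(⌊t⌋, p_n) ≥ r)` and `f(n) = o(1/p_n)`,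
`n(1 - π_n(n - f(n))) ∼ n (n p_n)^{r-1} (1-p_n)^n / (r-1)!` (ratio → 1). -/
theorem stmt_18 (r : ℕ) (hr : 2 ≤ r) (p : ℕ → ℝ)
    (hp : ∀ n, p n ∈ Set.Ioo (0 : ℝ) 1)
    (hp0 : Tendsto p atTop (nhds 0))
    (hnp : Tendsto (fun n : ℕ => (n : ℝ) * p n) atTop atTop)
    (f : ℕ → ℝ) (hf : ∀ n, 0 < f n)
    (hfp : Tendsto (fun n => f n * p n) atTop (nhds 0)) :
    Tendsto (fun n : ℕ =>
        ((n : ℝ) * (1 - binomTail ⌊(n : ℝ) - f n⌋₊ (p n) r)) /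
          ((n : ℝ) * ((n : ℝ) * p n) ^ (r - 1) * (1 - p n) ^ n /
            ((r - 1).factorial : ℝ)))
      atTop (nhds 1) := by
  set M : ℕ → ℕ := fun n => ⌊(n : ℝ) - f n⌋₊ with hM
  set K : ℕ → ℕ := fun n => n - M n with hK
  set φ : ℕ → ℕ → ℝ := fun i n =>
    (((r - 1).factorial * (M n).choose i : ℕ) : ℝ) /
        (((n : ℝ) * p n) ^ (r - 1 - i) * (n : ℝ) ^ i) *
      ((1 - p n) ^ (K n + i))⁻¹ with hφdef
  -- basic facts
  have hp1 : ∀ n, 0 < p n := fun n => (hp n).1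
  have hp2 : ∀ n, p n < 1 := fun n => (hp n).2
  -- f n / n → 0
  have h_fdiv : Tendsto (fun n : ℕ => f n / n) atTop (nhds 0) := by
    have h := hfp.div_atTop hnp
    apply h.congr'
    filter_upwards [eventually_gt_atTop 0] with n hn
    have : (0:ℝ) < n := by exact_mod_cast hn
    rw [mul_div_mul_right _ _ (hp1 n).ne']
  -- eventually f n < n / 2
  have hfn : ∀ᶠ n : ℕ in atTop, f n < (n : ℝ) / 2 := by
    filter_upwards [h_fdiv.eventually (gt_mem_nhds (show (0:ℝ) < 1/2 by norm_num)),
      eventually_gt_atTop 0] with n h1 h2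
    have hn : (0:ℝ) < n := by exact_mod_cast h2
    rw [div_lt_iff₀ hn] at h1
    linarith
  -- eventual bounds on M
  have hMle : ∀ᶠ n : ℕ in atTop, M n ≤ n := by
    filter_upwards with n
    simp only [hM]
    calc ⌊(n : ℝ) - f n⌋₊ ≤ ⌊(n : ℝ)⌋₊ := Nat.floor_le_floor (by linarith [hf n])
    _ = n := Nat.floor_natCast n
  have hMup : ∀ᶠ n : ℕ in atTop, (M n : ℝ) ≤ (n : ℝ) - f n := by
    filter_upwards [hfn, eventually_gt_atTop 0] with n h1 h2
    have hn : (0:ℝ) < n := by exact_mod_cast h2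
    exact Nat.floor_le (by linarith)
  have hMlow : ∀ᶠ n : ℕ in atTop, (n : ℝ) - f n - 1 < M n := by
    filter_upwards with n
    have := Nat.lt_floor_add_one ((n : ℝ) - f n)
    simp only [hM]
    linarith
  have hMge : ∀ᶠ n : ℕ in atTop, r ≤ M n := by
    filter_upwards [hMlow, hfn, eventually_ge_atTop (2*r + 4)] with n h1 h2 h3
    have h4 : (2*r + 4 : ℝ) ≤ (n : ℝ) := by exact_mod_cast h3
    have : (r : ℝ) ≤ (M n : ℝ) := by
      push_cast at h4 ⊢
      linarith
    exact_mod_cast this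
  -- M n / n → 1
  have hmn : Tendsto (fun n : ℕ => (M n : ℝ) / n) atTop (nhds 1) := by
    have hlow : Tendsto (fun n : ℕ => 1 - (f n / n + 1 / n)) atTop (nhds 1) := by
      have h1 : Tendsto (fun n : ℕ => f n / n + 1 / n) atTop (nhds 0) := by
        have := h_fdiv.add (tendsto_one_div_atTop_nhds_zero_nat)
        simpa using this
      have := (tendsto_const_nhds (x := (1:ℝ)) (f := atTop (α := ℕ))).sub h1
      simpa using this
    apply tendsto_of_tendsto_of_tendsto_of_le_of_le' hlow tendsto_const_nhds
    · filter_upwards [hMlow, eventually_gt_atTop 0] with n h1 h2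
      have hn : (0:ℝ) < n := by exact_mod_cast h2
      have h3 : ((n:ℝ) - f n - 1) / n ≤ (M n : ℝ) / n := by
        gcongr
      calc 1 - (f n / ↑n + 1 / ↑n) = ((n:ℝ) - f n - 1) / n := by field_simp; ring
      _ ≤ _ := h3
    · filter_upwards [hMle, eventually_gt_atTop 0] with n h1 h2
      have hn : (0:ℝ) < n := by exact_mod_cast h2
      rw [div_le_one hn]
      exact_mod_cast h1
  -- (K n : ℝ) ≤ f n + 1 eventually
  have hKb : ∀ᶠ n : ℕ in atTop, (K n : ℝ) ≤ f n + 1 := by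
    filter_upwards [hMle, hMlow] with n h1 h2
    have : (K n : ℝ) = (n : ℝ) - (M n : ℝ) := by
      simp only [hK]
      push_cast [Nat.cast_sub h1]
      ring
    rw [this]
    linarith
  -- (1 - p)^(K n + c) → 1 for each constant c
  have hq1 : ∀ c : ℕ, Tendsto (fun n : ℕ => (1 - p n) ^ (K n + c)) atTop (nhds 1) := by
    intro c
    have hlow : Tendsto (fun n : ℕ => 1 - (f n * p n + (1 + c) * p n)) atTop (nhds 1) := by
      have h1 : Tendsto (fun n : ℕ => f n * p n + (1 + c) * p n) atTop (nhds 0) := by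
        have := hfp.add (hp0.const_mul ((1:ℝ) + c))
        simpa using this
      have := (tendsto_const_nhds (x := (1:ℝ)) (f := atTop (α := ℕ))).sub h1
      simpa using this
    apply tendsto_of_tendsto_of_tendsto_of_le_of_le' hlow tendsto_const_nhds
    · filter_upwards [hKb] with n h1
      have hb := one_add_mul_le_pow (a := -p n) (by linarith [hp2 n]) (K n + c)
      have h2 : ((K n + c : ℕ) : ℝ) * p n ≤ f n * p n + (1 + c) * p n := by
        have : ((K n + c : ℕ) : ℝ) ≤ f n + 1 + c := by push_cast; linarith
        nlinarith [hp1 n]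
      calc 1 - (f n * p n + (1 + c) * p n) ≤ 1 + ((K n + c : ℕ) : ℝ) * (- p n) := by
            push_cast at h2 ⊢; nlinarith
      _ ≤ (1 + - p n) ^ (K n + c) := hb
      _ = (1 - p n) ^ (K n + c) := by ring_nf
    · filter_upwards with n
      exact pow_le_one₀ (by linarith [hp2 n]) (by linarith [hp1 n])
  -- limits of φ i
  have hφ : ∀ i ∈ Finset.range r,
      Tendsto (φ i) atTop (nhds (if i = r - 1 then 1 else 0)) := by
    intro i hi
    have hi' : i ≤ r - 1 := by simp at hi; omega
    have hqinv : Tendsto (fun n : ℕ => ((1 - p n) ^ (K n + i))⁻¹) atTop (nhds 1) := by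
      have := (hq1 i).inv₀ one_ne_zero
      simpa using this
    have hc : Tendsto (fun n : ℕ =>
        (((r - 1).factorial * (M n).choose i : ℕ) : ℝ) /
          (((n : ℝ) * p n) ^ (r - 1 - i) * (n : ℝ) ^ i)) atTop
        (nhds (if i = r - 1 then 1 else 0)) := by
      rcases eq_or_ne i (r - 1) with hieq | hine
      · rw [if_pos hieq, hieq]
        have hprod : Tendsto (fun n : ℕ => ∏ j ∈ Finset.range (r - 1),
            (((M n : ℝ) - j) / n)) atTop (nhds 1) := by
          have heach : ∀ j ∈ Finset.range (r - 1),
              Tendsto (fun n : ℕ => ((M n : ℝ) - j) / n) atTop (nhds 1) := by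
            intro j _
            have hj : Tendsto (fun n : ℕ => (j : ℝ) / n) atTop (nhds 0) :=
              tendsto_const_div_atTop_nhds_zero_nat (j : ℝ)
            have := hmn.sub hj
            simp only [sub_zero] at this
            apply this.congr
            intro n
            rw [sub_div]
          have := tendsto_finset_prod (Finset.range (r - 1)) heach
          simpa using this
        refine Tendsto.congr' ?_ hprod
        filter_upwards [hMge] with n h1
        rw [Nat.sub_self, pow_zero, one_mul]
        have hd : (r - 1).factorial * (M n).choose (r - 1) = (M n).descFactorial (r - 1) :=
          (Nat.descFactorial_eq_factorial_mul_choose _ _).symm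
        rw [Finset.prod_div_distrib, Finset.prod_const, Finset.card_range, hd,
          Nat.descFactorial_eq_prod_range, Nat.cast_prod]
        congr 1
        apply Finset.prod_congr rfl
        intro j hj
        simp only [Finset.mem_range] at hj
        rw [Nat.cast_sub (by omega)]
      · rw [if_neg hine]
        have hupper : Tendsto (fun n : ℕ =>
            ((r - 1).factorial : ℝ) / (i.factorial : ℝ) *
              (((n : ℝ) * p n) ^ (r - 1 - i))⁻¹) atTop (nhds 0) := by
          have h1 : Tendsto (fun n : ℕ => ((n : ℝ) * p n) ^ (r - 1 - i)) atTop atTop :=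
            (tendsto_pow_atTop (by omega)).comp hnp
          have h2 := h1.inv_tendsto_atTop
          have := h2.const_mul (((r - 1).factorial : ℝ) / (i.factorial : ℝ))
          simpa using this
        apply tendsto_of_tendsto_of_tendsto_of_le_of_le' tendsto_const_nhds hupper
        · filter_upwards [hnp.eventually_ge_atTop 1, eventually_gt_atTop 0] with n h1 h2
          have hnp1 : (0:ℝ) < (n : ℝ) * p n := by linarith
          have hn0 : (0:ℝ) < (n : ℝ) := by exact_mod_cast h2
          positivity
        · filter_upwards [hMle, hnp.eventually_ge_atTop 1, eventually_gt_atTop 0]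
            with n h1 h2 h3
          have hn0 : (0:ℝ) < (n : ℝ) := by exact_mod_cast h3
          have hnp1 : (0:ℝ) < (n : ℝ) * p n := by linarith
          have hB : (0:ℝ) < ((n : ℝ) * p n) ^ (r - 1 - i) := pow_pos hnp1 _
          have hfi : (0:ℝ) < (i.factorial : ℝ) := by exact_mod_cast i.factorial_pos
          have h4 : i.factorial * (M n).choose i ≤ n ^ i := by
            rw [← Nat.descFactorial_eq_factorial_mul_choose]
            exact le_trans (Nat.descFactorial_le_pow _ _) (Nat.pow_le_pow_left h1 i)
          have hnum : (((r - 1).factorial * (M n).choose i : ℕ) : ℝ) ≤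
              ((r - 1).factorial : ℝ) / (i.factorial : ℝ) * (n : ℝ) ^ i := by
            rw [div_mul_eq_mul_div, le_div_iff₀ hfi]
            have h5 : ((i.factorial * (M n).choose i : ℕ) : ℝ) ≤ ((n : ℝ)) ^ i := by
              exact_mod_cast h4
            push_cast at h5 ⊢
            nlinarith [Nat.cast_nonneg (α := ℝ) (r - 1).factorial]
          calc (((r - 1).factorial * (M n).choose i : ℕ) : ℝ) /
                (((n : ℝ) * p n) ^ (r - 1 - i) * (n : ℝ) ^ i)
              ≤ (((r - 1).factorial : ℝ) / (i.factorial : ℝ) * (n : ℝ) ^ i) /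
                (((n : ℝ) * p n) ^ (r - 1 - i) * (n : ℝ) ^ i) := by
                gcongr
          _ = ((r - 1).factorial : ℝ) / (i.factorial : ℝ) *
                (((n : ℝ) * p n) ^ (r - 1 - i))⁻¹ := by
                have hni : ((n:ℝ) ^ i) ≠ 0 := by positivity
                field_simp
    have h2 := hc.mul hqinv
    rw [mul_one] at h2
    apply h2.congr
    intro n
    simp only [hφdef]
  have hsum := tendsto_finset_sum (Finset.range r) hφ
  have hone : ∑ i ∈ Finset.range r, (if i = r - 1 then (1:ℝ) else 0) = 1 := by
    rw [Finset.sum_ite_eq' (Finset.range r) (r - 1) (fun _ => (1:ℝ))]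
    simp only [Finset.mem_range, if_pos (by omega : r - 1 < r)]
  rw [hone] at hsum
  refine Tendsto.congr' ?_ hsum
  filter_upwards [hMge, hMle, eventually_gt_atTop 0] with n h1 h2 h3
  have hbt : 1 - binomTail (M n) (p n) r = ∑ i ∈ Finset.range r, binomialP (M n) (p n) i :=
    one_sub_binomTail _ _ _ (by omega)
  show ∑ i ∈ Finset.range r, φ i n = ((n : ℝ) * (1 - binomTail (M n) (p n) r)) / _
  rw [hbt, Finset.mul_sum, Finset.sum_div]
  apply Finset.sum_congr rfl
  intro i hi
  simp only [Finset.mem_range] at hi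
  have hn0 : (0:ℝ) < (n : ℝ) := by exact_mod_cast h3
  have hpn := hp1 n
  have hq0 : (0:ℝ) < 1 - p n := by linarith [hp2 n]
  have hfr : ((r - 1).factorial : ℝ) ≠ 0 := by exact_mod_cast (r - 1).factorial_ne_zero
  have e1 : ((n : ℝ) * p n) ^ (r - 1) =
      ((n : ℝ) * p n) ^ (r - 1 - i) * ((n : ℝ) * p n) ^ i := by
    rw [← pow_add]; congr 1; omega
  have e2 : (1 - p n) ^ n = (1 - p n) ^ (M n - i) * (1 - p n) ^ (K n + i) := by
    rw [← pow_add]; congr 1; simp only [hK]; omega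
  simp only [hφdef, binomialP]
  rw [e1, e2]
  push_cast
  field_simp
  ring
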